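/- In the canonical RFA of a regular language L, the transitions are saturated: if L₂ is any prime residual with L₂ ⊆ a⁻¹L₁, then L₂ ∈ δ(L₁, a); moreover adding any transition (L₁, a, L₂) with L₂ ⊄ a⁻¹L₁ would change the accepted language, i.e., would make the automaton accept some string not in L. -/

import Mathlib

def res {α : Type*} (L : Set (List α)) (u : List α) : Set (List α) := {v | u ++ v ∈ L}

def Res {α : Type*} (L : Set (List α)) : Set (Set (List α)) := {L' | ∃ u, L' = res L u}

/-- A language is prime in a class `𝕃` if it belongs to `𝕃` and is not the union of the
languages of `𝕃` strictly contained in it. -/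
def IsPrimeIn {α : Type*} (𝕃 : Set (Set (List α))) (L : Set (List α)) : Prop :=
  L ∈ 𝕃 ∧ L ≠ ⋃₀ {L' | L' ∈ 𝕃 ∧ L' ⊂ L}

def IsRegularLang {α : Type*} (L : Set (List α)) : Prop :=
  ∃ (σ : Type) (_ : Fintype σ) (M : DFA α σ), ∀ w, w ∈ M.accepts ↔ w ∈ L

/-- The canonical RFA of a language `L`: states are the prime residual languages of `L`. -/
def canonicalRFA {α : Type*} (L : Set (List α)) :
    NFA α {L' : Set (List α) // IsPrimeIn (Res L) L'} where
  step q a := {q' | q'.1 ⊆ res q.1 [a]}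
  start := {q | q.1 ⊆ L}
  accept := {q | [] ∈ q.1}

/-- The language accepted from a single state `q` of an NFA. -/
def lq {α σ : Type*} (M : NFA α σ) (q : σ) : Set (List α) :=
  {w | (M.evalFrom {q} w ∩ M.accept).Nonempty}

section Aux

variable {α : Type*}

lemma res_res (L : Set (List α)) (u v : List α) : res (res L u) v = res L (u ++ v) := by
  ext w; simp [res, List.append_assoc]

lemma res_nil (L : Set (List α)) : res L [] = L := by ext w; simp [res]

lemma res_mono {A B : Set (List α)} (h : A ⊆ B) (u : List α) : res A u ⊆ res B u :=
  fun _ hv => h hv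

lemma res_mem_Res {L R : Set (List α)} (hR : R ∈ Res L) (u : List α) : res R u ∈ Res L := by
  obtain ⟨w, rfl⟩ := hR
  exact ⟨w ++ u, res_res L w u⟩

lemma finite_Res (L : Set (List α)) (hreg : IsRegularLang L) : (Res L).Finite := by
  obtain ⟨σ, hσ, M, hM⟩ := hreg
  have hsub : Res L ⊆ Set.range (fun s : σ => {v | M.evalFrom s v ∈ M.accept}) := by
    rintro _ ⟨u, rfl⟩
    refine ⟨M.eval u, ?_⟩
    ext v
    simp only [res, Set.mem_setOf_eq]
    rw [← hM (u ++ v), DFA.mem_accepts]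
    show M.evalFrom (M.eval u) v ∈ M.accept ↔ M.evalFrom M.start (u ++ v) ∈ M.accept
    rw [DFA.evalFrom_of_append]
    rfl
  exact (Set.finite_range _).subset hsub

/-- every element of a residual lies in a prime residual below it -/
lemma prime_cover (L : Set (List α)) (hfin : (Res L).Finite) :
    ∀ R ∈ Res L, ∀ x ∈ R, ∃ P, IsPrimeIn (Res L) P ∧ P ⊆ R ∧ x ∈ P := by
  have hwf : (Res L).WellFoundedOn (· < ·) := hfin.wellFoundedOn
  intro R hR
  refine Set.WellFoundedOn.induction hwf hR (P := fun R => ∀ x ∈ R, ∃ P, IsPrimeIn (Res L) P ∧ P ⊆ R ∧ x ∈ P) ?_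
  intro R' hR' ih x hx
  by_cases hp : IsPrimeIn (Res L) R'
  · exact ⟨R', hp, subset_rfl, hx⟩
  · have heq : R' = ⋃₀ {L' | L' ∈ Res L ∧ L' ⊂ R'} := by
      unfold IsPrimeIn at hp
      push_neg at hp
      exact hp hR'
    rw [heq] at hx
    obtain ⟨L', ⟨hL'mem, hL'lt⟩, hxL'⟩ := hx
    obtain ⟨P, hP, hPs, hxP⟩ := ih L' hL'mem hL'lt x hxL'
    exact ⟨P, hP, hPs.trans hL'lt.subset, hxP⟩

/-- upper bound on states reached -/
lemma evalFrom_subset (L : Set (List α)) :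
    ∀ (w : List α) (S : Set {L' : Set (List α) // IsPrimeIn (Res L) L'}) (R : Set (List α)),
      (∀ q ∈ S, q.1 ⊆ R) → ∀ q ∈ (canonicalRFA L).evalFrom S w, q.1 ⊆ res R w := by
  intro w
  induction w with
  | nil => intro S R hS q hq; rw [res_nil]; exact hS q hq
  | cons b w ih =>
    intro S R hS q hq
    have h1 : ∀ p ∈ (canonicalRFA L).stepSet S b, p.1 ⊆ res R [b] := by
      intro p hp
      rw [NFA.mem_stepSet] at hp
      obtain ⟨t, htS, hpt⟩ := hp
      exact subset_trans hpt (res_mono (hS t htS) [b])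
    have := ih ((canonicalRFA L).stepSet S b) (res R [b]) h1 q hq
    rwa [res_res] at this

/-- lower bound: the union of reached states covers the residual -/
lemma evalFrom_cover (L : Set (List α)) (hfin : (Res L).Finite) :
    ∀ (w u : List α) (S : Set {L' : Set (List α) // IsPrimeIn (Res L) L'}),
      (∀ y ∈ res L u, ∃ q ∈ S, y ∈ q.1) →
      ∀ x ∈ res L (u ++ w), ∃ q ∈ (canonicalRFA L).evalFrom S w, x ∈ q.1 := by
  intro w
  induction w with
  | nil => intro u S hS x hx; rw [List.append_nil] at hx; exact hS x hx
  | cons b w ih =>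
    intro u S hS x hx
    have hstep : ∀ y ∈ res L (u ++ [b]), ∃ q ∈ (canonicalRFA L).stepSet S b, y ∈ q.1 := by
      intro y hy
      have hy' : b :: y ∈ res L u := by
        simpa [res, List.append_assoc] using hy
      obtain ⟨q, hqS, hyq⟩ := hS _ hy'
      have hyr : y ∈ res q.1 [b] := hyq
      obtain ⟨P, hP, hPs, hyP⟩ :=
        prime_cover L hfin (res q.1 [b]) (res_mem_Res q.2.1 [b]) y hyr
      refine ⟨⟨P, hP⟩, ?_, hyP⟩
      rw [NFA.mem_stepSet]
      exact ⟨q, hqS, hPs⟩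
    have hx' : x ∈ res L ((u ++ [b]) ++ w) := by
      rwa [List.append_assoc, List.singleton_append]
    exact ih (u ++ [b]) _ hstep x hx'

/-- a prime residual `res L u` is reached by reading `u` -/
lemma prime_reach (L : Set (List α)) (hfin : (Res L).Finite)
    (L₁ : {L' : Set (List α) // IsPrimeIn (Res L) L'}) (u : List α) (hu : L₁.1 = res L u) :
    L₁ ∈ (canonicalRFA L).evalFrom (canonicalRFA L).start u := by
  by_contra hn
  apply L₁.2.2
  apply Set.Subset.antisymm
  · intro x hx
    have hx' : x ∈ res L ([] ++ u) := by rwa [List.nil_append, ← hu]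
    have hstart : ∀ y ∈ res L [], ∃ q ∈ (canonicalRFA L).start, y ∈ q.1 := by
      intro y hy
      rw [res_nil] at hy
      obtain ⟨P, hP, hPs, hyP⟩ :=
        prime_cover L hfin L ⟨[], (res_nil L).symm⟩ y hy
      exact ⟨⟨P, hP⟩, hPs, hyP⟩
    obtain ⟨q, hq, hxq⟩ := evalFrom_cover L hfin u [] _ hstart x hx'
    have hsub : q.1 ⊆ res L u :=
      evalFrom_subset L u (canonicalRFA L).start L (fun p hp => hp) q hq
    have hne : q.1 ≠ L₁.1 := by
      intro h
      exact hn (by rwa [Subtype.ext h] at hq)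
    refine ⟨q.1, ⟨q.2.1, ?_⟩, hxq⟩
    rw [hu]
    exact ssubset_of_subset_of_ne hsub (by rw [← hu]; exact hne)
  · exact Set.sUnion_subset fun L' hL' => hL'.2.subset

/-- from any state containing `w`, reading `w` reaches an accepting state,
in any NFA whose transitions contain those of the canonical RFA -/
lemma accept_run (L : Set (List α)) (hfin : (Res L).Finite)
    (M : NFA α {L' : Set (List α) // IsPrimeIn (Res L) L'})
    (hstep : ∀ q a, (canonicalRFA L).step q a ⊆ M.step q a) :
    ∀ (w : List α) (S : Set {L' : Set (List α) // IsPrimeIn (Res L) L'}),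
      (∃ q ∈ S, w ∈ q.1) → ∃ q ∈ M.evalFrom S w, [] ∈ q.1 := by
  intro w
  induction w with
  | nil => rintro S ⟨q, hq, hw⟩; exact ⟨q, hq, hw⟩
  | cons b w ih =>
    rintro S ⟨q, hq, hw⟩
    have hwr : w ∈ res q.1 [b] := hw
    obtain ⟨P, hP, hPs, hwP⟩ :=
      prime_cover L hfin (res q.1 [b]) (res_mem_Res q.2.1 [b]) w hwr
    refine ih (M.stepSet S b) ⟨⟨P, hP⟩, ?_, hwP⟩
    rw [NFA.mem_stepSet]
    exact ⟨q, hq, hstep q b hPs⟩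

lemma evalFrom_mono {σ : Type*} (M M' : NFA α σ)
    (hstep : ∀ q a, M.step q a ⊆ M'.step q a) :
    ∀ (w : List α) (S S' : Set σ), S ⊆ S' → M.evalFrom S w ⊆ M'.evalFrom S' w := by
  intro w
  induction w with
  | nil => intro S S' h; exact h
  | cons b w ih =>
    intro S S' h
    refine ih _ _ ?_
    intro q hq
    rw [NFA.mem_stepSet] at hq ⊢
    obtain ⟨t, ht, hqt⟩ := hq
    exact ⟨t, h ht, hstep t b hqt⟩

end Aux

theorem canonicalRFA_saturated {α : Type*} (L : Set (List α)) (hreg : IsRegularLang L) :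
    -- saturation: every prime residual contained in `a⁻¹L₁` is a target of the transition
    (∀ (L₁ L₂ : {L' : Set (List α) // IsPrimeIn (Res L) L'}) (a : α),
      L₂.1 ⊆ res L₁.1 [a] → L₂ ∈ (canonicalRFA L).step L₁ a) ∧
    -- adding any other transition makes the automaton accept a string outside `L`
    (∀ (L₁ L₂ : {L' : Set (List α) // IsPrimeIn (Res L) L'}) (a : α),
      ¬ L₂.1 ⊆ res L₁.1 [a] →
      ∃ w : List α,
        w ∈ (NFA.mk
              (fun q b => (canonicalRFA L).step q b ∪ {q' | q = L₁ ∧ b = a ∧ q' = L₂})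
              (canonicalRFA L).start (canonicalRFA L).accept).accepts ∧ w ∉ L) := by
  have hfin := finite_Res L hreg
  constructor
  · intro L₁ L₂ a h
    exact h
  · intro L₁ L₂ a h
    obtain ⟨u, hu⟩ := L₁.2.1
    obtain ⟨v, hv₂, hv₁⟩ := Set.not_subset.mp h
    set M' : NFA α {L' : Set (List α) // IsPrimeIn (Res L) L'} :=
      NFA.mk (fun q b => (canonicalRFA L).step q b ∪ {q' | q = L₁ ∧ b = a ∧ q' = L₂})
        (canonicalRFA L).start (canonicalRFA L).accept with hM'
    have hstep : ∀ q b, (canonicalRFA L).step q b ⊆ M'.step q b := by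
      intro q b
      exact Set.subset_union_left
    refine ⟨u ++ a :: v, ?_, ?_⟩
    · rw [NFA.mem_accepts]
      have h1 : L₁ ∈ (canonicalRFA L).evalFrom (canonicalRFA L).start u :=
        prime_reach L hfin L₁ u hu
      have h2 : L₁ ∈ M'.evalFrom M'.start u :=
        evalFrom_mono (canonicalRFA L) M' hstep u _ _ (by exact subset_rfl) h1
      have h3 : L₂ ∈ M'.stepSet (M'.evalFrom M'.start u) a := by
        rw [NFA.mem_stepSet]
        exact ⟨L₁, h2, Or.inr ⟨rfl, rfl, rfl⟩⟩
      obtain ⟨q, hq, hacc⟩ :=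
        accept_run L hfin M' hstep v (M'.stepSet (M'.evalFrom M'.start u) a) ⟨L₂, h3, hv₂⟩
      refine ⟨q, hacc, ?_⟩
      show q ∈ M'.evalFrom M'.start (u ++ a :: v)
      have happ : M'.evalFrom M'.start (u ++ a :: v)
          = M'.evalFrom (M'.evalFrom M'.start u) (a :: v) := by
        unfold NFA.evalFrom
        exact List.foldl_append
      rw [happ]
      exact hq
    · intro hw
      apply hv₁
      have : a :: v ∈ res L u := by
        simpa [res] using hw
      rw [hu]
      exact this
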